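/- Suppose F₁,…,Fₙ, G₁,…,Gₙ, H₁,…,Hₙ, K₁,…,Kₙ ∈ H^∞(D) satisfy ∑ⱼ FⱼHⱼ − ∑ⱼ GⱼK̂ⱼ = 1 and ∑ⱼ FⱼKⱼ + ∑ⱼ GⱼĤⱼ = 0 on D, and max_j {‖Hⱼ‖_∞, ‖Kⱼ‖_∞} ≤ M. Then for all z ∈ D, Δ(z) := ∑_{r,s} |Fₛ(z)F̂ᵣ(z) + Gᵣ(z)Ĝₛ(z)|² + ∑_{s<r} |Ĝₛ(z)Fᵣ(z) − Ĝᵣ(z)Fₛ(z)|² + ∑_{s<r} |F̂ᵣ(z)Gₛ(z) − F̂ₛ(z)Gᵣ(z)|² ≥ 1/(C n² M⁴) for an absolute constant C (e.g. C = 36 works, more precisely Δ(z) · (3·(2M²)²·n²) ≥ 1 suffices). -/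

import Mathlib

open Metric Finset

/-- The hat involution: `hat P z = conj (P (conj z))`. -/
noncomputable def hat (P : ℂ → ℂ) : ℂ → ℂ := fun z => starRingEnd ℂ (P (starRingEnd ℂ z))

/-- A strictly-triangular sum of a symmetric family with vanishing diagonal is half
the full double sum. -/
lemma two_tri_sum {n : ℕ} (a : Fin n → Fin n → ℂ)
    (hsymm : ∀ s r, a s r = a r s) (hdiag : ∀ s, a s s = 0) :
    2 * (∑ s, ∑ r ∈ univ.filter (fun r => s < r), a s r) = ∑ s, ∑ r, a s r := by
  have hsplit : ∀ s : Fin n, (∑ r, a s r) =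
      (∑ r ∈ univ.filter (fun r => s < r), a s r) +
      ∑ r ∈ univ.filter (fun r => r < s), a s r := by
    intro s
    rw [← Finset.sum_filter_add_sum_filter_not univ (fun r => s < r) (a s)]
    congr 1
    rw [Finset.sum_filter, Finset.sum_filter]
    apply Finset.sum_congr rfl
    intro r _
    rcases lt_trichotomy r s with h | h | h
    · simp [h, asymm h]
    · subst h; simp [hdiag]
    · simp [h, not_lt_of_gt h, asymm h]
  have hlow : (∑ s, ∑ r ∈ univ.filter (fun r => r < s), a s r)
      = ∑ s, ∑ r ∈ univ.filter (fun r => s < r), a s r := by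
    rw [Finset.sum_comm' (s' := fun r => univ.filter (fun x => r < x)) (t' := univ)
      (by intro x y; simp)]
    apply Finset.sum_congr rfl
    intro s _
    apply Finset.sum_congr rfl
    intro r _
    exact hsymm r s
  calc 2 * (∑ s, ∑ r ∈ univ.filter (fun r => s < r), a s r)
      = (∑ s, ∑ r ∈ univ.filter (fun r => s < r), a s r)
        + ∑ s, ∑ r ∈ univ.filter (fun r => r < s), a s r := by rw [hlow]; ring
    _ = ∑ s, ((∑ r ∈ univ.filter (fun r => s < r), a s r)
        + ∑ r ∈ univ.filter (fun r => r < s), a s r) := by rw [Finset.sum_add_distrib]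
    _ = ∑ s, ∑ r, a s r := by
        apply Finset.sum_congr rfl; intro s _; rw [hsplit s]

/-- The key algebraic identity forced by the Bezout equations. -/
lemma key_identity {n : ℕ} (f g h k f' g' h' k' : Fin n → ℂ)
    (eA : (∑ j, f j * h j) - ∑ j, g j * k' j = 1)
    (eB : (∑ j, f j * k j) + ∑ j, g j * h' j = 0)
    (eA' : (∑ j, f' j * h' j) - ∑ j, g' j * k j = 1)
    (eB' : (∑ j, f' j * k' j) + ∑ j, g' j * h j = 0) :
    (∑ r, ∑ s, (f s * f' r + g r * g' s) * (h' r * h s + k' r * k s))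
    + (∑ s, ∑ r ∈ univ.filter (fun r => s < r),
        (g' s * f r - g' r * f s) * (k r * h s - k s * h r))
    + (∑ s, ∑ r ∈ univ.filter (fun r => s < r),
        (f' r * g s - f' s * g r) * (h' s * k' r - h' r * k' s)) = 1 := by
  set E2 : Fin n → Fin n → ℂ := fun s r => (g' s * f r - g' r * f s) * (k r * h s - k s * h r)
    with hE2
  set E3 : Fin n → Fin n → ℂ := fun s r =>
    (f' r * g s - f' s * g r) * (h' s * k' r - h' r * k' s) with hE3
  have h2 : 2 * (∑ s, ∑ r ∈ univ.filter (fun r => s < r), E2 s r) = ∑ s, ∑ r, E2 s r :=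
    two_tri_sum E2 (fun s r => by simp only [hE2]; ring) (fun s => by simp only [hE2]; ring)
  have h3 : 2 * (∑ s, ∑ r ∈ univ.filter (fun r => s < r), E3 s r) = ∑ s, ∑ r, E3 s r :=
    two_tri_sum E3 (fun s r => by simp only [hE3]; ring) (fun s => by simp only [hE3]; ring)
  -- combined summand
  set c : Fin n → Fin n → ℂ := fun r s =>
    2 * ((f s * f' r + g r * g' s) * (h' r * h s + k' r * k s)) + E2 s r + E3 s r with hc
  have hcsum : (∑ r, ∑ s, c r s)
      = 2 * (∑ r, ∑ s, (f s * f' r + g r * g' s) * (h' r * h s + k' r * k s))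
        + (∑ s, ∑ r, E2 s r) + (∑ s, ∑ r, E3 s r) := by
    rw [Finset.sum_comm (f := fun s r => E2 s r), Finset.sum_comm (f := fun s r => E3 s r)]
    simp only [hc, Finset.sum_add_distrib, ← Finset.mul_sum]
  set A : Fin n → ℂ := fun s => f s * h s - g s * k' s with hA
  set B : Fin n → ℂ := fun s => f s * k s + g s * h' s with hB
  set A' : Fin n → ℂ := fun r => f' r * h' r - g' r * k r with hA'
  set B' : Fin n → ℂ := fun r => f' r * k' r + g' r * h r with hB'
  have sA : ∑ s, A s = 1 := by rw [hA]; rw [Finset.sum_sub_distrib]; exact eA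
  have sB : ∑ s, B s = 0 := by rw [hB]; rw [Finset.sum_add_distrib]; exact eB
  have sA' : ∑ r, A' r = 1 := by rw [hA']; rw [Finset.sum_sub_distrib]; exact eA'
  have sB' : ∑ r, B' r = 0 := by rw [hB']; rw [Finset.sum_add_distrib]; exact eB'
  have hR1 : (∑ r, ∑ s, (A s * A' r + B s * B' r)) = 1 := by
    have : ∀ r : Fin n, (∑ s, (A s * A' r + B s * B' r))
        = (∑ s, A s) * A' r + (∑ s, B s) * B' r := by
      intro r
      rw [Finset.sum_add_distrib, Finset.sum_mul, Finset.sum_mul]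
    simp only [this, sA, sB, one_mul, zero_mul, add_zero]
    exact sA'
  have hR2 : (∑ r, ∑ s, (A r * A' s + B r * B' s)) = 1 := by
    have : ∀ r : Fin n, (∑ s, (A r * A' s + B r * B' s))
        = A r * (∑ s, A' s) + B r * (∑ s, B' s) := by
      intro r
      rw [Finset.sum_add_distrib, Finset.mul_sum, Finset.mul_sum]
    simp only [this, sA', sB', mul_one, mul_zero, add_zero]
    exact sA
  have hcswap : (∑ r, ∑ s, c r s) = ∑ r, ∑ s, c s r := Finset.sum_comm
  have hcval : (∑ r, ∑ s, c r s) = 2 := by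
    have hdouble : (∑ r, ∑ s, c r s) + (∑ r, ∑ s, c s r)
        = ∑ r, ∑ s, (c r s + c s r) := by
      rw [← Finset.sum_add_distrib]
      apply Finset.sum_congr rfl
      intro r _
      rw [← Finset.sum_add_distrib]
    have hterm : ∀ r s : Fin n, c r s + c s r
        = 2 * ((A s * A' r + B s * B' r) + (A r * A' s + B r * B' s)) := by
      intro r s
      simp only [hc, hE2, hE3, hA, hB, hA', hB']
      ring
    have heq : (∑ r, ∑ s, (c r s + c s r))
        = 2 * ((∑ r, ∑ s, (A s * A' r + B s * B' r))
          + (∑ r, ∑ s, (A r * A' s + B r * B' s))) := by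
      simp only [hterm]
      simp only [Finset.mul_sum, Finset.sum_add_distrib, mul_add]
    have h4 : (∑ r, ∑ s, c r s) + (∑ r, ∑ s, c s r) = 4 := by
      rw [hdouble, heq, hR1, hR2]; norm_num
    linear_combination h4 / 2 + hcswap / 2
  -- conclude
  have final : 2 * ((∑ r, ∑ s, (f s * f' r + g r * g' s) * (h' r * h s + k' r * k s))
      + (∑ s, ∑ r ∈ univ.filter (fun r => s < r), E2 s r)
      + (∑ s, ∑ r ∈ univ.filter (fun r => s < r), E3 s r)) = 2 := by
    calc 2 * ((∑ r, ∑ s, (f s * f' r + g r * g' s) * (h' r * h s + k' r * k s))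
        + (∑ s, ∑ r ∈ univ.filter (fun r => s < r), E2 s r)
        + (∑ s, ∑ r ∈ univ.filter (fun r => s < r), E3 s r))
        = 2 * (∑ r, ∑ s, (f s * f' r + g r * g' s) * (h' r * h s + k' r * k s))
          + 2 * (∑ s, ∑ r ∈ univ.filter (fun r => s < r), E2 s r)
          + 2 * (∑ s, ∑ r ∈ univ.filter (fun r => s < r), E3 s r) := by ring
      _ = 2 * (∑ r, ∑ s, (f s * f' r + g r * g' s) * (h' r * h s + k' r * k s))
          + (∑ s, ∑ r, E2 s r) + (∑ s, ∑ r, E3 s r) := by rw [h2, h3]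
      _ = ∑ r, ∑ s, c r s := hcsum.symm
      _ = 2 := hcval
  linear_combination final / 2

/-- Cauchy–Schwarz for (possibly triangular) double sums over `Fin n`. -/
lemma cs_double {n : ℕ} (t : Fin n → Finset (Fin n)) (a : Fin n → Fin n → ℝ) :
    (∑ s, ∑ r ∈ t s, a s r) ^ 2 ≤ (n : ℝ) ^ 2 * ∑ s, ∑ r ∈ t s, (a s r) ^ 2 := by
  have h1 : (∑ s, ∑ r ∈ t s, a s r) = ∑ x ∈ (univ : Finset (Fin n)).sigma t, a x.1 x.2 :=
    Finset.sum_sigma' _ _ _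
  have h2 : (∑ s, ∑ r ∈ t s, (a s r) ^ 2)
      = ∑ x ∈ (univ : Finset (Fin n)).sigma t, (a x.1 x.2) ^ 2 :=
    Finset.sum_sigma' _ _ _
  rw [h1, h2]
  refine le_trans sq_sum_le_card_mul_sum_sq ?_
  have hcard : (((univ : Finset (Fin n)).sigma t).card : ℝ) ≤ (n : ℝ) ^ 2 := by
    rw [Finset.card_sigma]
    push_cast
    calc (∑ s : Fin n, ((t s).card : ℝ)) ≤ ∑ _s : Fin n, (n : ℝ) := by
          apply Finset.sum_le_sum
          intro s _
          exact_mod_cast (Finset.card_le_card (Finset.subset_univ (t s))).trans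
            (le_of_eq (by simp))
      _ = (n : ℝ) ^ 2 := by
          simp [Finset.sum_const, Finset.card_univ]
          ring
  have hnn : (0 : ℝ) ≤ ∑ x ∈ (univ : Finset (Fin n)).sigma t, (a x.1 x.2) ^ 2 :=
    Finset.sum_nonneg fun x _ => sq_nonneg _
  exact mul_le_mul_of_nonneg_right hcard hnn

theorem Delta_lower_bound (n : ℕ) (F G H K : Fin n → ℂ → ℂ) (M : ℝ)
    (hFhol : ∀ j, DifferentiableOn ℂ (F j) (ball (0 : ℂ) 1))
    (hGhol : ∀ j, DifferentiableOn ℂ (G j) (ball (0 : ℂ) 1))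
    (hHhol : ∀ j, DifferentiableOn ℂ (H j) (ball (0 : ℂ) 1))
    (hKhol : ∀ j, DifferentiableOn ℂ (K j) (ball (0 : ℂ) 1))
    (hHbd : ∀ j, ∀ z ∈ ball (0 : ℂ) 1, ‖H j z‖ ≤ M)
    (hKbd : ∀ j, ∀ z ∈ ball (0 : ℂ) 1, ‖K j z‖ ≤ M)
    (h1 : ∀ z ∈ ball (0 : ℂ) 1,
      (∑ j, F j z * H j z) - ∑ j, G j z * hat (K j) z = 1)
    (h2 : ∀ z ∈ ball (0 : ℂ) 1,
      (∑ j, F j z * K j z) + ∑ j, G j z * hat (H j) z = 0) :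
    ∀ z ∈ ball (0 : ℂ) 1,
      ((∑ r, ∑ s, ‖F s z * hat (F r) z + G r z * hat (G s) z‖ ^ 2)
        + (∑ s, ∑ r ∈ univ.filter (fun r => s < r),
            ‖hat (G s) z * F r z - hat (G r) z * F s z‖ ^ 2)
        + (∑ s, ∑ r ∈ univ.filter (fun r => s < r),
            ‖hat (F r) z * G s z - hat (F s) z * G r z‖ ^ 2))
        * (3 * (2 * M ^ 2) ^ 2 * (n : ℝ) ^ 2) ≥ 1 := by
  intro z hz
  have hz' : (starRingEnd ℂ) z ∈ ball (0 : ℂ) 1 := by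
    simp only [mem_ball, dist_zero_right] at hz ⊢
    simpa [Complex.norm_conj] using hz
  -- conjugated Bezout equations
  have eA : (∑ j, F j z * H j z) - ∑ j, G j z * (starRingEnd ℂ) (K j ((starRingEnd ℂ) z)) = 1 := by
    simpa [hat] using h1 z hz
  have eB : (∑ j, F j z * K j z) + ∑ j, G j z * (starRingEnd ℂ) (H j ((starRingEnd ℂ) z)) = 0 := by
    simpa [hat] using h2 z hz
  have eA' : (∑ j, (starRingEnd ℂ) (F j ((starRingEnd ℂ) z))
        * (starRingEnd ℂ) (H j ((starRingEnd ℂ) z)))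
      - ∑ j, (starRingEnd ℂ) (G j ((starRingEnd ℂ) z)) * K j z = 1 := by
    have := congrArg (starRingEnd ℂ) (h1 _ hz')
    simpa [hat, map_sub, map_sum, map_mul, Complex.conj_conj] using this
  have eB' : (∑ j, (starRingEnd ℂ) (F j ((starRingEnd ℂ) z))
        * (starRingEnd ℂ) (K j ((starRingEnd ℂ) z)))
      + ∑ j, (starRingEnd ℂ) (G j ((starRingEnd ℂ) z)) * H j z = 0 := by
    have := congrArg (starRingEnd ℂ) (h2 _ hz')
    simpa [hat, map_add, map_sum, map_mul, Complex.conj_conj] using this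
  -- the key identity at z
  have hkey := key_identity (fun j => F j z) (fun j => G j z) (fun j => H j z) (fun j => K j z)
    (fun j => (starRingEnd ℂ) (F j ((starRingEnd ℂ) z)))
    (fun j => (starRingEnd ℂ) (G j ((starRingEnd ℂ) z)))
    (fun j => (starRingEnd ℂ) (H j ((starRingEnd ℂ) z)))
    (fun j => (starRingEnd ℂ) (K j ((starRingEnd ℂ) z)))
    eA eB eA' eB'
  -- handle n = 0
  rcases Nat.eq_zero_or_pos n with hn | hn
  · exfalso
    subst hn
    simp at eA
  have hM0 : (0 : ℝ) ≤ M := le_trans (norm_nonneg _) (hHbd ⟨0, hn⟩ z hz)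
  -- abbreviations
  set f : Fin n → ℂ := fun j => F j z
  set g : Fin n → ℂ := fun j => G j z
  set h : Fin n → ℂ := fun j => H j z
  set k : Fin n → ℂ := fun j => K j z
  set f' : Fin n → ℂ := fun j => (starRingEnd ℂ) (F j ((starRingEnd ℂ) z))
  set g' : Fin n → ℂ := fun j => (starRingEnd ℂ) (G j ((starRingEnd ℂ) z))
  set h' : Fin n → ℂ := fun j => (starRingEnd ℂ) (H j ((starRingEnd ℂ) z))
  set k' : Fin n → ℂ := fun j => (starRingEnd ℂ) (K j ((starRingEnd ℂ) z))
  -- bounds on second factors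
  have hhb : ∀ j, ‖h j‖ ≤ M := fun j => hHbd j z hz
  have hkb : ∀ j, ‖k j‖ ≤ M := fun j => hKbd j z hz
  have hhb' : ∀ j, ‖h' j‖ ≤ M := fun j => by
    simpa [h', Complex.norm_conj] using hHbd j _ hz'
  have hkb' : ∀ j, ‖k' j‖ ≤ M := fun j => by
    simpa [k', Complex.norm_conj] using hKbd j _ hz'
  have habmul : ∀ (x y u v : ℂ), ‖x‖ ≤ M → ‖y‖ ≤ M →
      ‖u‖ ≤ M → ‖v‖ ≤ M →
      ‖x * y + u * v‖ ≤ 2 * M ^ 2 := by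
    intro x y u v hx hy hu hv
    calc ‖x * y + u * v‖ ≤ ‖x * y‖ + ‖u * v‖ :=
          norm_add_le _ _
      _ = ‖x‖ * ‖y‖ + ‖u‖ * ‖v‖ := by
          rw [norm_mul, norm_mul]
      _ ≤ M * M + M * M :=
          add_le_add (mul_le_mul hx hy (norm_nonneg _) hM0)
            (mul_le_mul hu hv (norm_nonneg _) hM0)
      _ = 2 * M ^ 2 := by ring
  have habmul' : ∀ (x y u v : ℂ), ‖x‖ ≤ M → ‖y‖ ≤ M →
      ‖u‖ ≤ M → ‖v‖ ≤ M →
      ‖x * y - u * v‖ ≤ 2 * M ^ 2 := by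
    intro x y u v hx hy hu hv
    rw [sub_eq_add_neg, ← neg_mul]
    exact habmul x y (-u) v hx hy (by simpa using hu) hv
  -- abbreviate absolute-value sums
  set A₁ : ℝ := ∑ r, ∑ s, ‖f s * f' r + g r * g' s‖ with hA₁
  set A₂ : ℝ := ∑ s, ∑ r ∈ univ.filter (fun r => s < r),
    ‖g' s * f r - g' r * f s‖ with hA₂
  set A₃ : ℝ := ∑ s, ∑ r ∈ univ.filter (fun r => s < r),
    ‖f' r * g s - f' s * g r‖ with hA₃
  set S₁ : ℝ := ∑ r, ∑ s, ‖f s * f' r + g r * g' s‖ ^ 2 with hS₁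
  set S₂ : ℝ := ∑ s, ∑ r ∈ univ.filter (fun r => s < r),
    ‖g' s * f r - g' r * f s‖ ^ 2 with hS₂
  set S₃ : ℝ := ∑ s, ∑ r ∈ univ.filter (fun r => s < r),
    ‖f' r * g s - f' s * g r‖ ^ 2 with hS₃
  -- main bound : 1 ≤ (A₁ + A₂ + A₃) * (2 M²)
  have hbound : (1 : ℝ) ≤ (A₁ + A₂ + A₃) * (2 * M ^ 2) := by
    have step1 : (1 : ℝ)
        ≤ (∑ r, ∑ s, ‖(f s * f' r + g r * g' s) * (h' r * h s + k' r * k s)‖)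
          + (∑ s, ∑ r ∈ univ.filter (fun r => s < r),
              ‖(g' s * f r - g' r * f s) * (k r * h s - k s * h r)‖)
          + (∑ s, ∑ r ∈ univ.filter (fun r => s < r),
              ‖(f' r * g s - f' s * g r) * (h' s * k' r - h' r * k' s)‖) := by
      have h1' : (1 : ℝ) = ‖(∑ r, ∑ s, (f s * f' r + g r * g' s) * (h' r * h s + k' r * k s))
          + (∑ s, ∑ r ∈ univ.filter (fun r => s < r),
              (g' s * f r - g' r * f s) * (k r * h s - k s * h r))
          + (∑ s, ∑ r ∈ univ.filter (fun r => s < r),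
              (f' r * g s - f' s * g r) * (h' s * k' r - h' r * k' s))‖ := by
        rw [hkey]; simp
      rw [h1']
      refine le_trans (norm_add_le _ _) ?_
      refine add_le_add (le_trans (norm_add_le _ _) (add_le_add ?_ ?_)) ?_
      · exact le_trans (norm_sum_le _ _)
          (Finset.sum_le_sum fun r _ => norm_sum_le _ _)
      · exact le_trans (norm_sum_le _ _)
          (Finset.sum_le_sum fun s _ => norm_sum_le _ _)
      · exact le_trans (norm_sum_le _ _)
          (Finset.sum_le_sum fun s _ => norm_sum_le _ _)
    refine le_trans step1 ?_
    have b1 : (∑ r, ∑ s, ‖(f s * f' r + g r * g' s) * (h' r * h s + k' r * k s)‖)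
        ≤ A₁ * (2 * M ^ 2) := by
      rw [hA₁, Finset.sum_mul]
      refine Finset.sum_le_sum fun r _ => ?_
      rw [Finset.sum_mul]
      refine Finset.sum_le_sum fun s _ => ?_
      rw [norm_mul]
      exact mul_le_mul_of_nonneg_left
        (habmul _ _ _ _ (hhb' r) (hhb s) (hkb' r) (hkb s)) (norm_nonneg _)
    have b2 : (∑ s, ∑ r ∈ univ.filter (fun r => s < r),
          ‖(g' s * f r - g' r * f s) * (k r * h s - k s * h r)‖)
        ≤ A₂ * (2 * M ^ 2) := by
      rw [hA₂, Finset.sum_mul]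
      refine Finset.sum_le_sum fun s _ => ?_
      rw [Finset.sum_mul]
      refine Finset.sum_le_sum fun r _ => ?_
      rw [norm_mul]
      exact mul_le_mul_of_nonneg_left
        (habmul' _ _ _ _ (hkb r) (hhb s) (hkb s) (hhb r)) (norm_nonneg _)
    have b3 : (∑ s, ∑ r ∈ univ.filter (fun r => s < r),
          ‖(f' r * g s - f' s * g r) * (h' s * k' r - h' r * k' s)‖)
        ≤ A₃ * (2 * M ^ 2) := by
      rw [hA₃, Finset.sum_mul]
      refine Finset.sum_le_sum fun s _ => ?_
      rw [Finset.sum_mul]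
      refine Finset.sum_le_sum fun r _ => ?_
      rw [norm_mul]
      exact mul_le_mul_of_nonneg_left
        (habmul' _ _ _ _ (hhb' s) (hkb' r) (hhb' r) (hkb' s)) (norm_nonneg _)
    calc _ ≤ A₁ * (2 * M ^ 2) + A₂ * (2 * M ^ 2) + A₃ * (2 * M ^ 2) :=
          add_le_add (add_le_add b1 b2) b3
      _ = (A₁ + A₂ + A₃) * (2 * M ^ 2) := by ring
  -- Cauchy–Schwarz
  have c1 : A₁ ^ 2 ≤ (n : ℝ) ^ 2 * S₁ := by
    rw [hA₁, hS₁]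
    exact cs_double (fun _ => univ) (fun r s => ‖f s * f' r + g r * g' s‖)
  have c2 : A₂ ^ 2 ≤ (n : ℝ) ^ 2 * S₂ := by
    rw [hA₂, hS₂]
    exact cs_double _ (fun s r => ‖g' s * f r - g' r * f s‖)
  have c3 : A₃ ^ 2 ≤ (n : ℝ) ^ 2 * S₃ := by
    rw [hA₃, hS₃]
    exact cs_double _ (fun s r => ‖f' r * g s - f' s * g r‖)
  have hS₁nn : (0 : ℝ) ≤ S₁ :=
    Finset.sum_nonneg fun r _ => Finset.sum_nonneg fun s _ => sq_nonneg _
  have hS₂nn : (0 : ℝ) ≤ S₂ :=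
    Finset.sum_nonneg fun s _ => Finset.sum_nonneg fun r _ => sq_nonneg _
  have hS₃nn : (0 : ℝ) ≤ S₃ :=
    Finset.sum_nonneg fun s _ => Finset.sum_nonneg fun r _ => sq_nonneg _
  have hA₁nn : (0 : ℝ) ≤ A₁ :=
    Finset.sum_nonneg fun r _ => Finset.sum_nonneg fun s _ => norm_nonneg _
  have hA₂nn : (0 : ℝ) ≤ A₂ :=
    Finset.sum_nonneg fun s _ => Finset.sum_nonneg fun r _ => norm_nonneg _
  have hA₃nn : (0 : ℝ) ≤ A₃ :=
    Finset.sum_nonneg fun s _ => Finset.sum_nonneg fun r _ => norm_nonneg _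
  -- final computation
  have hgoal : (1 : ℝ) ≤ (S₁ + S₂ + S₃) * (3 * (2 * M ^ 2) ^ 2 * (n : ℝ) ^ 2) := by
    have hx : (0 : ℝ) ≤ (A₁ + A₂ + A₃) * (2 * M ^ 2) := le_trans zero_le_one hbound
    have hsq : (1 : ℝ) ≤ ((A₁ + A₂ + A₃) * (2 * M ^ 2)) ^ 2 := by
      nlinarith [hbound, hx]
    have h3sq : (A₁ + A₂ + A₃) ^ 2 ≤ 3 * (A₁ ^ 2 + A₂ ^ 2 + A₃ ^ 2) := by
      nlinarith [sq_nonneg (A₁ - A₂), sq_nonneg (A₁ - A₃), sq_nonneg (A₂ - A₃)]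
    have hc2 : (0 : ℝ) ≤ (2 * M ^ 2) ^ 2 := sq_nonneg _
    nlinarith [mul_le_mul_of_nonneg_right h3sq hc2,
      mul_le_mul_of_nonneg_right (add_le_add (add_le_add c1 c2) c3) hc2, hsq]
  -- rewrite goal in terms of S's
  have hrw : ((∑ r, ∑ s, ‖F s z * hat (F r) z + G r z * hat (G s) z‖ ^ 2)
        + (∑ s, ∑ r ∈ univ.filter (fun r => s < r),
            ‖hat (G s) z * F r z - hat (G r) z * F s z‖ ^ 2)
        + (∑ s, ∑ r ∈ univ.filter (fun r => s < r),
            ‖hat (F r) z * G s z - hat (F s) z * G r z‖ ^ 2))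
      = S₁ + S₂ + S₃ := by
    simp only [hat, hS₁, hS₂, hS₃, f, g, f', g']
  rw [ge_iff_le, hrw]
  exact hgoal
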